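/- Let n ≥ 1 and let ξ₁, …, ξ_n be i.i.d. Bernoulli(1/2) random variables, with V_k = Σ_{j=1}^k ξ_j. Let T be any reverse stopping time with values in {1, …, n}, i.e. {T = k} ∈ G_k for every k, where G_k = σ(V_j : k ≤ j ≤ n). Then E[ V_T / (1 + T − V_T) ] ≤ 1. -/

import Mathlib

open MeasureTheory ProbabilityTheory Finset
open scoped ENNReal

/-- `V_k = Σ_{j=1}^k ξ_j`: the number of successes among the first `k` of the `ξ_j`. -/
def Vcount {Ω : Type*} {n : ℕ} (ξ : Fin n → Ω → Bool) (k : ℕ) (ω : Ω) : ℕ :=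
  (Finset.univ.filter (fun j : Fin n => (j : ℕ) < k ∧ ξ j ω = true)).card

/-- The reverse filtration `G_k = σ(V_j : k ≤ j ≤ n)`. -/
def revFilt {Ω : Type*} [MeasurableSpace Ω] {n : ℕ} (ξ : Fin n → Ω → Bool) (k : ℕ) :
    MeasurableSpace Ω :=
  ⨆ j ∈ Finset.Icc k n, MeasurableSpace.comap (fun ω => Vcount ξ j ω) inferInstance

namespace Stmt16Aux

/-- count of `true`s among the first `k` coordinates -/
def vc (n k : ℕ) (b : Fin n → Bool) : ℕ :=
  (Finset.univ.filter (fun j : Fin n => (j : ℕ) < k ∧ b j = true)).card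

lemma card_lt (n k : ℕ) (hk : k ≤ n) :
    (Finset.univ.filter (fun j : Fin n => (j:ℕ) < k)).card = k := by
  have : (Finset.univ.filter (fun j : Fin n => (j:ℕ) < k)) =
      Finset.attachFin (Finset.range k) (fun m hm => lt_of_lt_of_le (Finset.mem_range.1 hm) hk) := by
    ext a; simp [Finset.mem_attachFin]
  rw [this, Finset.card_attachFin, Finset.card_range]

lemma vc_add_zeros (n k : ℕ) (hk : k ≤ n) (b : Fin n → Bool) :
    vc n k b + (Finset.univ.filter (fun j : Fin n => (j:ℕ) < k ∧ b j = false)).card = k := by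
  have h := Finset.card_filter_add_card_filter_not
    (s := Finset.univ.filter (fun j : Fin n => (j:ℕ) < k)) (p := fun j => b j = true)
  rw [Finset.filter_filter, Finset.filter_filter, card_lt n k hk] at h
  simpa only [Bool.not_eq_true, vc] using h

lemma vc_le (n k : ℕ) (b : Fin n → Bool) : vc n k b ≤ k := by
  rcases le_total k n with hk | hk
  · have := vc_add_zeros n k hk b; omega
  · calc vc n k b ≤ (Finset.univ : Finset (Fin n)).card := Finset.card_le_card (Finset.filter_subset _ _)
    _ = n := by simp
    _ ≤ k := hk

lemma vc_update (n k : ℕ) (b : Fin n → Bool) (i : Fin n) (hik : (i:ℕ) < k) (hb : b i = false) :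
    vc n k (Function.update b i true) = vc n k b + 1 := by
  have hset : (Finset.univ.filter (fun j : Fin n => (j : ℕ) < k ∧ Function.update b i true j = true))
      = insert i (Finset.univ.filter (fun j : Fin n => (j : ℕ) < k ∧ b j = true)) := by
    ext j
    rcases eq_or_ne j i with rfl | hj
    · simp [Function.update_self, hik]
    · simp [Function.update_of_ne hj, hj]
  have hnotmem : i ∉ (Finset.univ.filter (fun j : Fin n => (j : ℕ) < k ∧ b j = true)) := by
    simp [hb]
  rw [vc, hset, Finset.card_insert_of_notMem hnotmem, vc]

lemma key (n : ℕ) (τ : (Fin n → Bool) → ℕ)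
    (hτ : ∀ b, τ b ∈ Finset.Icc 1 n)
    (hinv : ∀ (k : ℕ) (b b' : Fin n → Bool),
      (∀ j, k ≤ j → vc n j b = vc n j b') → (τ b = k ↔ τ b' = k)) :
    ∑ b : Fin n → Bool, (vc n (τ b) b : ℝ) / (1 + τ b - vc n (τ b) b) ≤ 2 ^ n := by
  classical
  set w : (Fin n → Bool) → ℝ := fun b => (1 + (τ b : ℝ) - vc n (τ b) b)⁻¹ with hw
  set PS : Finset ((Fin n → Bool) × Fin n) :=
    Finset.univ.filter (fun p => (p.2 : ℕ) < τ p.1 ∧ p.1 p.2 = true) with hPS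
  -- step 1+2: rewrite the sum as a sum over pairs
  have step1 : ∑ b : Fin n → Bool, (vc n (τ b) b : ℝ) / (1 + τ b - vc n (τ b) b)
      = ∑ p ∈ PS, w p.1 := by
    rw [hPS, Finset.sum_filter, Fintype.sum_prod_type]
    refine Finset.sum_congr rfl (fun b _ => ?_)
    dsimp only
    rw [← Finset.sum_filter (fun a : Fin n => (a:ℕ) < τ b ∧ b a = true) (fun _ => w b)]
    rw [Finset.sum_const,
      show (Finset.univ.filter (fun i : Fin n => (i : ℕ) < τ b ∧ b i = true)).card
        = vc n (τ b) b from rfl, nsmul_eq_mul, hw, div_eq_mul_inv]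
  rw [step1]
  -- step 3: fiberwise
  rw [← Finset.sum_fiberwise_of_maps_to (t := (Finset.univ : Finset (Fin n → Bool)))
    (g := fun p : (Fin n → Bool) × Fin n => Function.update p.1 p.2 false)
    (fun p _ => Finset.mem_univ _) (fun p => w p.1)]
  -- step 4: each fiber contributes at most 1
  have hfiber : ∀ b' : Fin n → Bool,
      ∑ p ∈ PS.filter (fun p => Function.update p.1 p.2 false = b'), w p.1 ≤ 1 := by
    intro b'
    set Fib := PS.filter (fun p => Function.update p.1 p.2 false = b') with hFib
    rcases Fib.eq_empty_or_nonempty with he | ⟨p₀, hp₀⟩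
    · rw [he]; simp
    -- basic facts about members of the fiber
    have hmem : ∀ p ∈ Fib, (p.2 : ℕ) < τ p.1 ∧ b' p.2 = false ∧ p.1 = Function.update b' p.2 true := by
      intro p hp
      rw [hFib, Finset.mem_filter, hPS, Finset.mem_filter] at hp
      obtain ⟨⟨-, hlt, htrue⟩, hupd⟩ := hp
      refine ⟨hlt, ?_, ?_⟩
      · rw [← hupd]; simp
      · rw [← hupd, Function.update_idem, ← htrue, Function.update_eq_self]
    set k := τ p₀.1 with hk
    have hkn : k ≤ n := (Finset.mem_Icc.1 (hτ p₀.1)).2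
    -- τ is constant on the fiber
    have hle : ∀ p ∈ Fib, ∀ q ∈ Fib, τ p.1 ≤ τ q.1 → τ p.1 = τ q.1 := by
      intro p hp q hq hpq
      obtain ⟨hpl, hpb, hpu⟩ := hmem p hp
      obtain ⟨hql, hqb, hqu⟩ := hmem q hq
      have hiff := hinv (τ q.1) p.1 q.1 (fun j hj => by
        rw [hpu, hqu, vc_update n j b' p.2 (lt_of_lt_of_le hpl (le_trans hpq hj)) hpb,
          vc_update n j b' q.2 (lt_of_lt_of_le hql hj) hqb])
      exact (hiff.2 rfl)
    have hconst : ∀ p ∈ Fib, τ p.1 = k := by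
      intro p hp
      rcases le_total (τ p.1) (τ p₀.1) with h | h
      · exact hle p hp p₀ hp₀ h
      · exact (hle p₀ hp₀ p hp h).symm
    -- vc k b' < k
    set Z := (Finset.univ.filter (fun j : Fin n => (j:ℕ) < k ∧ b' j = false)) with hZ
    have hZcard : vc n k b' + Z.card = k := vc_add_zeros n k hkn b'
    have hp₀Z : p₀.2 ∈ Z := by
      obtain ⟨hpl, hpb, -⟩ := hmem p₀ hp₀
      rw [hZ]; simp [hpb, hk ▸ hpl]
    have hZpos : 1 ≤ Z.card := Finset.card_pos.2 ⟨p₀.2, hp₀Z⟩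
    set m := k - vc n k b' with hm
    have hvlt : vc n k b' < k := by omega
    have hm1 : 1 ≤ m := by omega
    -- each weight equals m⁻¹
    have hwval : ∀ p ∈ Fib, w p.1 = (m : ℝ)⁻¹ := by
      intro p hp
      obtain ⟨hpl, hpb, hpu⟩ := hmem p hp
      have hτp : τ p.1 = k := hconst p hp
      have hvcp : vc n k p.1 = vc n k b' + 1 := by
        rw [hpu]; exact vc_update n k b' p.2 (hτp ▸ hpl) hpb
      rw [hw]
      simp only [hτp, hvcp]
      congr 1
      have : (vc n k b' : ℝ) ≤ (k : ℝ) := by exact_mod_cast hvlt.le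
      rw [hm]
      push_cast [Nat.cast_sub hvlt.le]
      ring
    -- fiber cardinality at most m
    have hcard : Fib.card ≤ m := by
      have hinj : ∀ p ∈ Fib, ∀ q ∈ Fib, p.2 = q.2 → p = q := by
        intro p hp q hq h2
        obtain ⟨-, -, hpu⟩ := hmem p hp
        obtain ⟨-, -, hqu⟩ := hmem q hq
        exact Prod.ext (by rw [hpu, hqu, h2]) h2
      have hmaps : ∀ p ∈ Fib, p.2 ∈ Z := by
        intro p hp
        obtain ⟨hpl, hpb, -⟩ := hmem p hp
        rw [hZ]; simp [hpb, lt_of_lt_of_le hpl (le_of_eq (hconst p hp))]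
      calc Fib.card ≤ Z.card := Finset.card_le_card_of_injOn Prod.snd hmaps hinj
        _ = m := by omega
    calc ∑ p ∈ Fib, w p.1 = ∑ _p ∈ Fib, (m:ℝ)⁻¹ := Finset.sum_congr rfl hwval
      _ = Fib.card * (m:ℝ)⁻¹ := by rw [Finset.sum_const, nsmul_eq_mul]
      _ ≤ m * (m:ℝ)⁻¹ := by
          apply mul_le_mul_of_nonneg_right _ (by positivity)
          exact_mod_cast hcard
      _ ≤ 1 := le_of_eq (mul_inv_cancel₀ (Nat.cast_ne_zero.2 (by omega)))
  calc ∑ b' : Fin n → Bool, ∑ p ∈ PS.filter (fun p => Function.update p.1 p.2 false = b'), w p.1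
      ≤ ∑ _b' : Fin n → Bool, (1:ℝ) := Finset.sum_le_sum (fun b' _ => hfiber b')
    _ = (Fintype.card (Fin n → Bool) : ℝ) := by
        rw [Finset.sum_const, Finset.card_univ, nsmul_eq_mul, mul_one]
    _ = 2 ^ n := by simp [Fintype.card_fun]

end Stmt16Aux

open Stmt16Aux in
/-- optional-stopping bound in the symmetric case. For i.i.d.
Bernoulli(1/2) variables and any reverse stopping time `T` with values in `{1, …, n}`,
`E[V_T/(1 + T − V_T)] ≤ 1`. -/
theorem stmt16 {Ω : Type*} [MeasurableSpace Ω] (P : Measure Ω) [IsProbabilityMeasure P]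
    (n : ℕ) (hn : 1 ≤ n)
    (ξ : Fin n → Ω → Bool) (hmeas : ∀ i, Measurable (ξ i))
    (hindep : iIndepFun ξ P)
    (hbern : ∀ i, P {ω | ξ i ω = true} = ENNReal.ofReal (1 / 2))
    (T : Ω → ℕ) (hTval : ∀ ω, T ω ∈ Finset.Icc 1 n)
    (hTstop : ∀ k, MeasurableSet[revFilt ξ k] {ω | T ω = k}) :
    ∫⁻ ω, ENNReal.ofReal
        ((Vcount ξ (T ω) ω : ℝ) / (1 + T ω - Vcount ξ (T ω) ω)) ∂P
      ≤ 1 := by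
  classical
  set ξvec : Ω → (Fin n → Bool) := fun ω i => ξ i ω with hξvecdef
  have hξvec : Measurable ξvec := measurable_pi_lambda _ hmeas
  have hVc : ∀ (k : ℕ) (ω : Ω), Vcount ξ k ω = vc n k (ξvec ω) := fun _ _ => rfl
  -- fibers of ξvec have measure (1/2)^n
  have hfiber : ∀ b : Fin n → Bool, P (ξvec ⁻¹' {b}) = ENNReal.ofReal (1/2) ^ n := by
    intro b
    have hset : ξvec ⁻¹' {b} = ⋂ i, ξ i ⁻¹' {b i} := by
      ext ω
      simp [hξvecdef, funext_iff]
    rw [hset, hindep.meas_iInter (fun i => ⟨{b i}, MeasurableSet.singleton _, rfl⟩)]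
    have hone : ∀ i, P (ξ i ⁻¹' {b i}) = ENNReal.ofReal (1/2) := by
      intro i
      have htrue : P (ξ i ⁻¹' {true}) = ENNReal.ofReal (1/2) := by
        rw [← hbern i]; rfl
      cases hbi : b i
      · have hcompl : ξ i ⁻¹' {false} = (ξ i ⁻¹' {true})ᶜ := by
          ext ω; simp
        rw [hcompl, measure_compl ((hmeas i) (MeasurableSet.singleton _)) (measure_ne_top _ _),
          measure_univ, htrue]
        rw [show ENNReal.ofReal (1/2) = 2⁻¹ by
          rw [show (1/2 : ℝ) = (2:ℝ)⁻¹ by norm_num, ENNReal.ofReal_inv_of_pos (by norm_num)]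
          norm_num]
        rw [ENNReal.one_sub_inv_two]
      · exact htrue
    rw [Finset.prod_congr rfl (fun i _ => hone i), Finset.prod_const, Finset.card_univ,
      Fintype.card_fin]
  -- fibers are nonempty, choose a section
  have hne : ∀ b : Fin n → Bool, ∃ ω, ξvec ω = b := by
    intro b
    by_contra h
    push_neg at h
    have : ξvec ⁻¹' {b} = ∅ := by
      ext ω; simp [h ω]
    have h0 := hfiber b
    rw [this, measure_empty] at h0
    exact (pow_ne_zero n (by norm_num [ENNReal.ofReal_eq_zero])) h0.symm
  choose sec hsec using hne
  -- invariance of revFilt-measurable sets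
  have inv_aux : ∀ (k : ℕ) (S : Set Ω), MeasurableSet[revFilt ξ k] S →
      ∀ ω ω', (∀ j, k ≤ j → j ≤ n → Vcount ξ j ω = Vcount ξ j ω') → (ω ∈ S ↔ ω' ∈ S) := by
    intro k S hS ω ω' hagree
    set Φ : Ω → (Fin (n+1) → ℕ) := fun ω j => if k ≤ (j:ℕ) then Vcount ξ j ω else 0 with hΦ
    have hle : revFilt ξ k ≤ MeasurableSpace.comap Φ ⊤ := by
      rw [revFilt]
      refine iSup_le (fun j => iSup_le (fun hj => ?_))
      rw [Finset.mem_Icc] at hj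
      have hfun : (fun ω => Vcount ξ j ω)
          = (fun φ : Fin (n+1) → ℕ => φ ⟨j, Nat.lt_succ_of_le hj.2⟩) ∘ Φ := by
        funext ω
        simp [hΦ, hj.1]
      rw [hfun, ← MeasurableSpace.comap_comp]
      exact MeasurableSpace.comap_mono le_top
    obtain ⟨C, -, hC⟩ := hle S hS
    have hΦeq : Φ ω = Φ ω' := by
      funext j
      simp only [hΦ]
      split
      · exact hagree j (by assumption) (Nat.lt_succ_iff.1 j.2)
      · rfl
    rw [← hC]
    simp [Set.mem_preimage, hΦeq]
  -- the stopping time factors through ξvec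
  set τ : (Fin n → Bool) → ℕ := fun b => T (sec b) with hτdef
  have hfact : ∀ ω, T ω = τ (ξvec ω) := by
    intro ω
    have := (inv_aux (T ω) {ω' | T ω' = T ω} (hTstop (T ω)) ω (sec (ξvec ω))
      (fun j _ _ => by rw [hVc, hVc, hsec])).mp rfl
    exact this.symm
  have hτval : ∀ b, τ b ∈ Finset.Icc 1 n := fun b => hTval (sec b)
  have hτinv : ∀ (k : ℕ) (b b' : Fin n → Bool),
      (∀ j, k ≤ j → vc n j b = vc n j b') → (τ b = k ↔ τ b' = k) := by
    intro k b b' hbb'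
    exact inv_aux k {ω' | T ω' = k} (hTstop k) (sec b) (sec b')
      (fun j hj _ => by rw [hVc, hVc, hsec, hsec]; exact hbb' j hj)
  -- transfer the integral to the cube
  set g : (Fin n → Bool) → ℝ≥0∞ := fun b =>
    ENNReal.ofReal ((vc n (τ b) b : ℝ) / (1 + τ b - vc n (τ b) b)) with hgdef
  have hint : ∫⁻ ω, ENNReal.ofReal
        ((Vcount ξ (T ω) ω : ℝ) / (1 + T ω - Vcount ξ (T ω) ω)) ∂P
      = ∫⁻ b, g b ∂(P.map ξvec) := by
    rw [lintegral_map (measurable_of_countable g) hξvec]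
    refine lintegral_congr (fun ω => ?_)
    rw [hgdef]
    simp only [← hfact ω, ← hVc]
  rw [hint, lintegral_fintype]
  have hmap : ∀ b : Fin n → Bool, (P.map ξvec) {b} = ENNReal.ofReal (1/2) ^ n := by
    intro b
    rw [Measure.map_apply hξvec (MeasurableSet.singleton _)]
    exact hfiber b
  calc ∑ b : Fin n → Bool, g b * (P.map ξvec) {b}
      = (∑ b : Fin n → Bool, g b) * ENNReal.ofReal (1/2) ^ n := by
        rw [Finset.sum_mul]
        exact Finset.sum_congr rfl (fun b _ => by rw [hmap b])
    _ ≤ 1 := by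
        have hsum : ∑ b : Fin n → Bool, g b
            = ENNReal.ofReal (∑ b : Fin n → Bool,
                (vc n (τ b) b : ℝ) / (1 + τ b - vc n (τ b) b)) := by
          rw [ENNReal.ofReal_sum_of_nonneg]
          intro b _
          apply div_nonneg (by positivity)
          have := vc_le n (τ b) b
          have : (vc n (τ b) b : ℝ) ≤ (τ b : ℝ) := by exact_mod_cast this
          linarith
        rw [hsum, ← ENNReal.ofReal_pow (by norm_num), ← ENNReal.ofReal_mul
          (Finset.sum_nonneg (fun b _ => div_nonneg (by positivity) (by
            have := vc_le n (τ b) b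
            have : (vc n (τ b) b : ℝ) ≤ (τ b : ℝ) := by exact_mod_cast this
            linarith)))]
        rw [show (1:ℝ≥0∞) = ENNReal.ofReal 1 by simp]
        apply ENNReal.ofReal_le_ofReal
        have hkey := key n τ hτval hτinv
        calc (∑ b : Fin n → Bool, (vc n (τ b) b : ℝ) / (1 + τ b - vc n (τ b) b)) * (1/2)^n
            ≤ (2:ℝ)^n * (1/2)^n := by
              apply mul_le_mul_of_nonneg_right hkey (by positivity)
          _ = 1 := by
              rw [← mul_pow]
              norm_num
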